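/- Let μ be a probability measure on a measurable space X, κ a Markov kernel from X to a measurable space Z, and let q_agg := μ.bind κ (the aggregate posterior, i.e. the mixture of the measures κ x under μ). Then for every probability measure p on Z, the average posterior-to-prior divergence decomposes as ∫ KL(κ x ‖ p) dμ(x) = ∫ KL(κ x ‖ q_agg) dμ(x) + KL(q_agg ‖ p), as an identity in the extended nonnegative reals. -/

import Mathlib

open MeasureTheory ProbabilityTheory
open scoped ENNReal

open Classical in
/-- Kullback–Leibler divergence: `∫ log (dq/dp) dq` if `q ≪ p` and the log-density
is `q`-integrable, and `∞` otherwise. -/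
noncomputable def klDiv {Z : Type*} [MeasurableSpace Z] (q p : Measure Z) : ℝ≥0∞ :=
  if q ≪ p ∧ Integrable (llr q p) q then ENNReal.ofReal (∫ z, llr q p z ∂q) else ⊤

section Aux

variable {Z : Type*} [MeasurableSpace Z]

lemma klDiv_of_pos {q p : Measure Z} (h : q ≪ p ∧ Integrable (llr q p) q) :
    klDiv q p = ENNReal.ofReal (∫ z, llr q p z ∂q) := by
  unfold klDiv; rw [if_pos h]

lemma klDiv_of_not {q p : Measure Z} (h : ¬ (q ≪ p ∧ Integrable (llr q p) q)) :
    klDiv q p = ⊤ := by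
  unfold klDiv; rw [if_neg h]

lemma lintegral_inv_rnDeriv_le_one (ρ σ : Measure Z) [IsProbabilityMeasure ρ]
    [IsProbabilityMeasure σ] (h : ρ ≪ σ) :
    ∫⁻ z, (ρ.rnDeriv σ z)⁻¹ ∂ρ ≤ 1 := by
  calc ∫⁻ z, (ρ.rnDeriv σ z)⁻¹ ∂ρ
      = ∫⁻ z, (ρ.rnDeriv σ z)⁻¹ ∂(σ.withDensity (ρ.rnDeriv σ)) := by
        rw [Measure.withDensity_rnDeriv_eq ρ σ h]
    _ = ∫⁻ z, (ρ.rnDeriv σ z * (ρ.rnDeriv σ z)⁻¹) ∂σ := by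
        refine (lintegral_withDensity_eq_lintegral_mul _ (Measure.measurable_rnDeriv ρ σ)
          (Measure.measurable_rnDeriv ρ σ).inv).trans ?_
        rfl
    _ ≤ ∫⁻ _, 1 ∂σ := lintegral_mono fun z => ENNReal.mul_inv_le_one _
    _ = 1 := by simp

lemma lintegral_ofReal_neg_llr_le_one (ρ σ : Measure Z) [IsProbabilityMeasure ρ]
    [IsProbabilityMeasure σ] (h : ρ ≪ σ) :
    ∫⁻ z, ENNReal.ofReal (-llr ρ σ z) ∂ρ ≤ 1 := by
  refine le_trans (lintegral_mono_ae ?_) (lintegral_inv_rnDeriv_le_one ρ σ h)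
  filter_upwards [Measure.rnDeriv_pos h, h.ae_le (Measure.rnDeriv_lt_top ρ σ)] with z hz1 hz2
  have ht : 0 < (ρ.rnDeriv σ z).toReal := ENNReal.toReal_pos hz1.ne' hz2.ne
  have hlog : -llr ρ σ z ≤ (ρ.rnDeriv σ z).toReal⁻¹ := by
    rw [llr, ← Real.log_inv]
    have := Real.log_le_sub_one_of_pos (inv_pos.mpr ht)
    linarith [inv_pos.mpr ht]
  calc ENNReal.ofReal (-llr ρ σ z) ≤ ENNReal.ofReal ((ρ.rnDeriv σ z).toReal⁻¹) :=
        ENNReal.ofReal_le_ofReal hlog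
    _ = (ρ.rnDeriv σ z)⁻¹ := by
        rw [← ENNReal.toReal_inv, ENNReal.ofReal_toReal (ENNReal.inv_ne_top.mpr hz1.ne')]

lemma integral_llr_nonneg' (ρ σ : Measure Z) [IsProbabilityMeasure ρ]
    [IsProbabilityMeasure σ] (h : ρ ≪ σ) (hi : Integrable (llr ρ σ) ρ) :
    0 ≤ ∫ z, llr ρ σ z ∂ρ := by
  have hglt : ∫⁻ z, ENNReal.ofReal ((ρ.rnDeriv σ z)⁻¹).toReal ∂ρ ≤ 1 :=
    le_trans (lintegral_mono fun z => ENNReal.ofReal_toReal_le)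
      (lintegral_inv_rnDeriv_le_one ρ σ h)
  have hg : Integrable (fun z => ((ρ.rnDeriv σ z)⁻¹).toReal) ρ := by
    refine ⟨((Measure.measurable_rnDeriv ρ σ).inv.ennreal_toReal).aestronglyMeasurable, ?_⟩
    rw [hasFiniteIntegral_iff_ofReal (ae_of_all _ fun z => ENNReal.toReal_nonneg)]
    exact lt_of_le_of_lt hglt ENNReal.one_lt_top
  have hle : (fun z => -llr ρ σ z) ≤ᵐ[ρ] fun z => ((ρ.rnDeriv σ z)⁻¹).toReal - 1 := by
    filter_upwards [Measure.rnDeriv_pos h, h.ae_le (Measure.rnDeriv_lt_top ρ σ)] with z hz1 hz2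
    have ht : 0 < (ρ.rnDeriv σ z).toReal := ENNReal.toReal_pos hz1.ne' hz2.ne
    rw [ENNReal.toReal_inv, llr, ← Real.log_inv]
    exact Real.log_le_sub_one_of_pos (inv_pos.mpr ht)
  have h1 : ∫ z, -llr ρ σ z ∂ρ ≤ ∫ z, (((ρ.rnDeriv σ z)⁻¹).toReal - 1) ∂ρ :=
    integral_mono_ae hi.neg (hg.sub (integrable_const 1)) hle
  have h2 : ∫ z, (((ρ.rnDeriv σ z)⁻¹).toReal - 1) ∂ρ
      = ∫ z, ((ρ.rnDeriv σ z)⁻¹).toReal ∂ρ - 1 := by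
    rw [integral_sub hg (integrable_const 1), integral_const]; simp
  have h3 : ∫ z, ((ρ.rnDeriv σ z)⁻¹).toReal ∂ρ ≤ 1 := by
    rw [integral_eq_lintegral_of_nonneg_ae (ae_of_all _ fun z => ENNReal.toReal_nonneg)
      hg.1]
    have := ENNReal.toReal_mono ENNReal.one_ne_top hglt
    simpa using this
  have h4 : ∫ z, -llr ρ σ z ∂ρ = -∫ z, llr ρ σ z ∂ρ := integral_neg _
  linarith

lemma llr_chain (ρ q p : Measure Z) [IsProbabilityMeasure ρ] [IsProbabilityMeasure q]
    [IsProbabilityMeasure p] (hρq : ρ ≪ q) (hqp : q ≪ p) :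
    llr ρ p =ᵐ[ρ] fun z => llr ρ q z + llr q p z := by
  have hρp : ρ ≪ p := hρq.trans hqp
  have hmul : ρ.rnDeriv q * q.rnDeriv p =ᵐ[p] ρ.rnDeriv p := Measure.rnDeriv_mul_rnDeriv hρq
  filter_upwards [hρp.ae_le hmul, Measure.rnDeriv_pos hρq, hρq.ae_le (Measure.rnDeriv_lt_top ρ q),
    hρq.ae_le (Measure.rnDeriv_pos hqp), hρp.ae_le (Measure.rnDeriv_lt_top q p)]
    with z hz hz1 hz2 hz3 hz4
  have e : llr ρ p z = Real.log ((ρ.rnDeriv q z).toReal * (q.rnDeriv p z).toReal) := by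
    rw [llr, ← hz, Pi.mul_apply, ENNReal.toReal_mul]
  rw [e, Real.log_mul (ENNReal.toReal_pos hz1.ne' hz2.ne).ne'
    (ENNReal.toReal_pos hz3.ne' hz4.ne).ne']
  rfl

lemma lintegral_ofReal_eq_ofReal_integral_max {ρ : Measure Z} {f : Z → ℝ}
    (hi : Integrable f ρ) :
    ∫⁻ z, ENNReal.ofReal (f z) ∂ρ = ENNReal.ofReal (∫ z, max (f z) 0 ∂ρ) := by
  rw [ofReal_integral_eq_lintegral_ofReal hi.pos_part
    (ae_of_all _ fun z => le_max_right _ _)]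
  refine lintegral_congr fun z => ?_
  rcases le_total 0 (f z) with h | h
  · rw [max_eq_left h]
  · rw [max_eq_right h, ENNReal.ofReal_of_nonpos h, ENNReal.ofReal_zero]

lemma lintegral_ofReal_lt_top_of_integrable {ρ : Measure Z} {f : Z → ℝ}
    (hi : Integrable f ρ) : ∫⁻ z, ENNReal.ofReal (f z) ∂ρ < ⊤ := by
  rw [lintegral_ofReal_eq_ofReal_integral_max hi]
  exact ENNReal.ofReal_lt_top

lemma lintegral_ofReal_eq_top_of_not_integrable {ρ : Measure Z} {f : Z → ℝ}
    (hf : Measurable f) (hni : ¬ Integrable f ρ)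
    (hneg : ∫⁻ z, ENNReal.ofReal (-f z) ∂ρ ≠ ⊤) :
    ∫⁻ z, ENNReal.ofReal (f z) ∂ρ = ⊤ := by
  by_contra hpos
  apply hni
  refine ⟨hf.aestronglyMeasurable, ?_⟩
  rw [hasFiniteIntegral_iff_norm]
  have hnorm : ∀ z, ENNReal.ofReal ‖f z‖ = ENNReal.ofReal (f z) + ENNReal.ofReal (-f z) := by
    intro z
    rcases le_total 0 (f z) with h | h
    · simp [Real.norm_of_nonneg h, ENNReal.ofReal_of_nonpos (neg_nonpos.mpr h)]
    · simp [Real.norm_of_nonpos h, ENNReal.ofReal_of_nonpos h]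
  calc ∫⁻ z, ENNReal.ofReal ‖f z‖ ∂ρ
      = ∫⁻ z, (ENNReal.ofReal (f z) + ENNReal.ofReal (-f z)) ∂ρ := lintegral_congr hnorm
    _ = ∫⁻ z, ENNReal.ofReal (f z) ∂ρ + ∫⁻ z, ENNReal.ofReal (-f z) ∂ρ :=
        lintegral_add_left hf.ennreal_ofReal _
    _ < ⊤ := ENNReal.add_lt_top.mpr ⟨lt_top_iff_ne_top.mpr hpos, lt_top_iff_ne_top.mpr hneg⟩

end Aux

/-- For a probability measure `μ` on `X`, a Markov kernel `κ` from `X` to `Z`, and the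
aggregate posterior `q_agg = μ.bind κ`, for every probability measure `p` on `Z`:
`∫ KL(κ x ‖ p) dμ(x) = ∫ KL(κ x ‖ q_agg) dμ(x) + KL(q_agg ‖ p)` in `ℝ≥0∞`. -/
theorem avg_klDiv_decomposition {X Z : Type*} [MeasurableSpace X] [MeasurableSpace Z]
    (μ : Measure X) [IsProbabilityMeasure μ] (κ : ProbabilityTheory.Kernel X Z)
    [ProbabilityTheory.IsMarkovKernel κ] (p : Measure Z) [IsProbabilityMeasure p] :
    ∫⁻ x, klDiv (κ x) p ∂μ = ∫⁻ x, klDiv (κ x) (μ.bind κ) ∂μ + klDiv (μ.bind κ) p := by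
  set q : Measure Z := μ.bind ⇑κ with hqdef
  haveI hqprob : IsProbabilityMeasure q := by
    constructor
    rw [hqdef, Measure.bind_apply MeasurableSet.univ κ.measurable.aemeasurable]
    simp
  by_cases hqp : q ≪ p
  · -- main case
    set L : Z → ℝ := llr q p with hLdef
    have hL : Measurable L := measurable_llr q p
    set ℓp : X → ℝ≥0∞ := fun x => ∫⁻ z, ENNReal.ofReal (L z) ∂(κ x) with hℓpdef
    set ℓm : X → ℝ≥0∞ := fun x => ∫⁻ z, ENNReal.ofReal (-L z) ∂(κ x) with hℓmdef
    have hℓp : Measurable ℓp :=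
      Measurable.lintegral_kernel_prod_right' (f := fun pr : X × Z => ENNReal.ofReal (L pr.2))
        (hL.ennreal_ofReal.comp measurable_snd)
    have hℓm : Measurable ℓm :=
      Measurable.lintegral_kernel_prod_right' (f := fun pr : X × Z => ENNReal.ofReal (-L pr.2))
        (hL.neg.ennreal_ofReal.comp measurable_snd)
    have hIp : ∫⁻ x, ℓp x ∂μ = ∫⁻ z, ENNReal.ofReal (L z) ∂q :=
      (Measure.lintegral_bind κ.measurable.aemeasurable hL.ennreal_ofReal.aemeasurable).symm
    have hIm : ∫⁻ x, ℓm x ∂μ = ∫⁻ z, ENNReal.ofReal (-L z) ∂q :=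
      (Measure.lintegral_bind κ.measurable.aemeasurable hL.neg.ennreal_ofReal.aemeasurable).symm
    have hImle : ∫⁻ x, ℓm x ∂μ ≤ 1 := by
      rw [hIm]; exact lintegral_ofReal_neg_llr_le_one q p hqp
    have hImne : ∫⁻ x, ℓm x ∂μ ≠ ⊤ := (lt_of_le_of_lt hImle ENNReal.one_lt_top).ne
    -- the null set where the density of q w.r.t. p vanishes
    set N : Set Z := {z | q.rnDeriv p z = 0} with hNdef
    have hNmeas : MeasurableSet N := (Measure.measurable_rnDeriv q p) (measurableSet_singleton 0)
    have hqN : q N = 0 := by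
      rw [← Measure.setLIntegral_rnDeriv hqp]
      rw [setLIntegral_congr_fun hNmeas (fun z hz => hz)]
      simp
    have hae1 : ∀ᵐ x ∂μ, κ x N = 0 := by
      have hb : ∫⁻ x, κ x N ∂μ = 0 := by
        rw [← Measure.bind_apply hNmeas κ.measurable.aemeasurable, ← hqdef, hqN]
      exact (lintegral_eq_zero_iff (κ.measurable_coe hNmeas)).mp hb
    have hae2 : ∀ᵐ x ∂μ, ℓm x < ⊤ := ae_lt_top hℓm hImne
    -- pointwise compensation identity
    have hstar : ∀ᵐ x ∂μ, klDiv (κ x) p + ℓm x = klDiv (κ x) q + ℓp x := by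
      filter_upwards [hae1, hae2] with x hxN hxm
      by_cases hxp : κ x ≪ p
      · -- κ x ≪ q via the set N
        have hxq : κ x ≪ q := by
          refine Measure.AbsolutelyContinuous.mk fun A hAm hqA => ?_
          have h1 : κ x (A ∩ N) = 0 := measure_mono_null Set.inter_subset_right hxN
          have h2 : p (A \ N) = 0 := by
            have hA0 : ∫⁻ z in A, q.rnDeriv p z ∂p = 0 := by
              rw [Measure.setLIntegral_rnDeriv hqp]; exact hqA
            have hcc : ∀ᵐ z ∂p, z ∈ A → q.rnDeriv p z = 0 :=
              (setLIntegral_eq_zero_iff hAm (Measure.measurable_rnDeriv q p)).mp hA0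
            rw [← nonpos_iff_eq_zero]
            refine le_trans (measure_mono ?_) (le_of_eq (ae_iff.mp hcc))
            intro z hz
            simp only [Set.mem_setOf_eq]
            intro hcontra
            exact hz.2 (hcontra hz.1)
          have h2' : κ x (A \ N) = 0 := hxp h2
          refine le_zero_iff.mp ?_
          calc κ x A = κ x ((A ∩ N) ∪ (A \ N)) := by rw [Set.inter_union_diff]
            _ ≤ κ x (A ∩ N) + κ x (A \ N) := measure_union_le _ _
            _ = 0 := by rw [h1, h2', add_zero]
        by_cases hiL : Integrable L (κ x)
        · by_cases hj : Integrable (llr (κ x) q) (κ x)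
          · -- all integrable: the exact computation
            have hchain : llr (κ x) p =ᵐ[κ x] fun z => llr (κ x) q z + L z :=
              llr_chain (κ x) q p hxq hqp
            have hip : Integrable (llr (κ x) p) (κ x) := (hj.add hiL).congr hchain.symm
            have e1 : klDiv (κ x) p
                = ENNReal.ofReal (∫ z, llr (κ x) q z ∂(κ x) + ∫ z, L z ∂(κ x)) := by
              rw [klDiv_of_pos ⟨hxp, hip⟩, integral_congr_ae hchain, integral_add hj hiL]
            have e2 : klDiv (κ x) q = ENNReal.ofReal (∫ z, llr (κ x) q z ∂(κ x)) :=
              klDiv_of_pos ⟨hxq, hj⟩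
            have e3 : ℓp x = ENNReal.ofReal (∫ z, max (L z) 0 ∂(κ x)) :=
              lintegral_ofReal_eq_ofReal_integral_max hiL
            have e4 : ℓm x = ENNReal.ofReal (∫ z, max (-L z) 0 ∂(κ x)) :=
              lintegral_ofReal_eq_ofReal_integral_max hiL.neg
            have ha : 0 ≤ ∫ z, llr (κ x) q z ∂(κ x) := integral_llr_nonneg' (κ x) q hxq hj
            have hat : 0 ≤ ∫ z, llr (κ x) q z ∂(κ x) + ∫ z, L z ∂(κ x) := by
              have := integral_llr_nonneg' (κ x) p hxp hip
              rwa [integral_congr_ae hchain, integral_add hj hiL] at this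
            have hmp : 0 ≤ ∫ z, max (L z) 0 ∂(κ x) :=
              integral_nonneg fun z => le_max_right _ _
            have hmm : 0 ≤ ∫ z, max (-L z) 0 ∂(κ x) :=
              integral_nonneg fun z => le_max_right _ _
            have ht : ∫ z, L z ∂(κ x)
                = ∫ z, max (L z) 0 ∂(κ x) - ∫ z, max (-L z) 0 ∂(κ x) :=
              calc ∫ z, L z ∂(κ x)
                  = ∫ z, (max (L z) 0 - max (-L z) 0) ∂(κ x) := by
                    exact integral_congr_ae (ae_of_all _ fun z =>
                      (max_zero_sub_max_neg_zero_eq_self (L z)).symm)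
                _ = ∫ z, max (L z) 0 ∂(κ x) - ∫ z, max (-L z) 0 ∂(κ x) :=
                    integral_sub hiL.pos_part hiL.neg_part
            rw [e1, e2, e3, e4, ← ENNReal.ofReal_add hat hmm, ← ENNReal.ofReal_add ha hmp]
            congr 1
            rw [ht]
            ring
          · -- llr (κ x) q not integrable: both sides ⊤
            have hnp : ¬ Integrable (llr (κ x) p) (κ x) := by
              intro hip
              apply hj
              have hchain : llr (κ x) p =ᵐ[κ x] fun z => llr (κ x) q z + L z :=
                llr_chain (κ x) q p hxq hqp
              refine (hip.sub hiL).congr ?_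
              filter_upwards [hchain] with z hz
              simp [hz]
            rw [klDiv_of_not fun h => hnp h.2, klDiv_of_not fun h => hj h.2, top_add, top_add]
        · -- L not integrable w.r.t. κ x : ℓp x = ⊤ and klDiv (κ x) p = ⊤
          have hℓpx : ℓp x = ⊤ :=
            lintegral_ofReal_eq_top_of_not_integrable hL hiL hxm.ne
          have hklp : klDiv (κ x) p = ⊤ := by
            by_cases hip : Integrable (llr (κ x) p) (κ x)
            · exfalso
              have hchain : llr (κ x) p =ᵐ[κ x] fun z => llr (κ x) q z + L z :=
                llr_chain (κ x) q p hxq hqp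
              have hb : ∀ᵐ z ∂(κ x), ENNReal.ofReal (L z)
                  ≤ ENNReal.ofReal (llr (κ x) p z) + ENNReal.ofReal (-llr (κ x) q z) := by
                filter_upwards [hchain] with z hz
                have : L z = llr (κ x) p z + (-llr (κ x) q z) := by rw [hz]; ring
                rw [this]
                exact ENNReal.ofReal_add_le
              have hle : ℓp x ≤ ∫⁻ z, (ENNReal.ofReal (llr (κ x) p z)
                  + ENNReal.ofReal (-llr (κ x) q z)) ∂(κ x) := lintegral_mono_ae hb
              rw [lintegral_add_left ((measurable_llr _ _).ennreal_ofReal)] at hle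
              have h1 : ∫⁻ z, ENNReal.ofReal (llr (κ x) p z) ∂(κ x) < ⊤ :=
                lintegral_ofReal_lt_top_of_integrable hip
              have h2 : ∫⁻ z, ENNReal.ofReal (-llr (κ x) q z) ∂(κ x) ≤ 1 :=
                lintegral_ofReal_neg_llr_le_one (κ x) q hxq
              rw [hℓpx] at hle
              exact absurd hle (by
                simp only [top_le_iff]
                exact (ENNReal.add_lt_top.mpr
                  ⟨h1, lt_of_le_of_lt h2 ENNReal.one_lt_top⟩).ne)
            · exact klDiv_of_not fun h => hip h.2
          rw [hℓpx, hklp, top_add, add_top]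
      · -- ¬ κ x ≪ p : both klDiv are ⊤
        have h1 : klDiv (κ x) p = ⊤ := klDiv_of_not fun h => hxp h.1
        have h2 : klDiv (κ x) q = ⊤ := klDiv_of_not fun h => hxp (h.1.trans hqp)
        rw [h1, h2, top_add, top_add]
    -- integrate the pointwise identity
    have hint : ∫⁻ x, klDiv (κ x) p ∂μ + ∫⁻ x, ℓm x ∂μ
        = ∫⁻ x, klDiv (κ x) q ∂μ + ∫⁻ x, ℓp x ∂μ := by
      rw [← lintegral_add_right _ hℓm, ← lintegral_add_right _ hℓp]
      exact lintegral_congr_ae hstar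
    by_cases hI : Integrable L q
    · -- KL(q‖p) finite
      have hK : klDiv q p = ENNReal.ofReal (∫ z, L z ∂q) := klDiv_of_pos ⟨hqp, hI⟩
      have hIp' : ∫⁻ x, ℓp x ∂μ = ENNReal.ofReal (∫ z, max (L z) 0 ∂q) := by
        rw [hIp]; exact lintegral_ofReal_eq_ofReal_integral_max hI
      have hIm' : ∫⁻ x, ℓm x ∂μ = ENNReal.ofReal (∫ z, max (-L z) 0 ∂q) := by
        rw [hIm]; exact lintegral_ofReal_eq_ofReal_integral_max hI.neg
      have ht : ∫ z, L z ∂q = ∫ z, max (L z) 0 ∂q - ∫ z, max (-L z) 0 ∂q :=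
        calc ∫ z, L z ∂q
            = ∫ z, (max (L z) 0 - max (-L z) 0) ∂q := by
              exact integral_congr_ae (ae_of_all _ fun z =>
                (max_zero_sub_max_neg_zero_eq_self (L z)).symm)
          _ = ∫ z, max (L z) 0 ∂q - ∫ z, max (-L z) 0 ∂q :=
              integral_sub hI.pos_part hI.neg_part
      have hLnn : 0 ≤ ∫ z, L z ∂q := integral_llr_nonneg' q p hqp hI
      have hmm : 0 ≤ ∫ z, max (-L z) 0 ∂q := integral_nonneg fun z => le_max_right _ _
      have hsplit : ∫⁻ x, ℓp x ∂μ = ∫⁻ x, ℓm x ∂μ + klDiv q p := by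
        rw [hIp', hIm', hK, ← ENNReal.ofReal_add hmm hLnn]
        congr 1
        rw [ht]
        ring
      rw [hsplit, ← add_assoc] at hint
      refine (ENNReal.add_left_inj hImne).mp ?_
      rw [hint]
      ring
    · -- KL(q‖p) = ⊤
      have hK : klDiv q p = ⊤ := klDiv_of_not fun h => hI h.2
      have hIptop : ∫⁻ x, ℓp x ∂μ = ⊤ := by
        rw [hIp]
        exact lintegral_ofReal_eq_top_of_not_integrable hL hI (by rw [← hIm]; exact hImne)
      have htop : ∫⁻ x, klDiv (κ x) p ∂μ + ∫⁻ x, ℓm x ∂μ = ⊤ := by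
        rw [hint, hIptop, add_top]
      have hXtop : ∫⁻ x, klDiv (κ x) p ∂μ = ⊤ := by
        by_contra hX
        exact absurd htop (ENNReal.add_lt_top.mpr
          ⟨lt_top_iff_ne_top.mpr hX, lt_top_iff_ne_top.mpr hImne⟩).ne
      rw [hXtop, hK, add_top]
  · -- q is not absolutely continuous w.r.t. p : both sides are ⊤
    have hK : klDiv q p = ⊤ := klDiv_of_not fun h => hqp h.1
    obtain ⟨s, hsm, hps, hqs⟩ : ∃ s, MeasurableSet s ∧ p s = 0 ∧ q s ≠ 0 := by
      by_contra h
      push_neg at h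
      exact hqp (Measure.AbsolutelyContinuous.mk fun s hsm hps => h s hsm hps)
    have hSmeas : MeasurableSet {x | κ x s ≠ 0} :=
      (κ.measurable_coe hsm) (measurableSet_singleton 0) |>.compl
    have hμS : μ {x | κ x s ≠ 0} ≠ 0 := by
      intro h0
      apply hqs
      rw [hqdef, Measure.bind_apply hsm κ.measurable.aemeasurable]
      have hle : ∫⁻ x, κ x s ∂μ ≤ ∫⁻ x, {x | κ x s ≠ 0}.indicator (fun _ => 1) x ∂μ := by
        refine lintegral_mono fun x => ?_
        by_cases hx : κ x s ≠ 0
        · rw [Set.indicator_of_mem (show x ∈ {x | κ x s ≠ 0} from hx)]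
          exact prob_le_one
        · push_neg at hx
          simp [hx]
      rw [lintegral_indicator hSmeas, setLIntegral_const, h0, mul_zero] at hle
      exact le_zero_iff.mp hle
    have htop : ∫⁻ x, klDiv (κ x) p ∂μ = ⊤ := by
      rw [eq_top_iff]
      calc (⊤ : ℝ≥0∞) = ⊤ * μ {x | κ x s ≠ 0} := (ENNReal.top_mul hμS).symm
        _ = ∫⁻ x, {x | κ x s ≠ 0}.indicator (fun _ => ⊤) x ∂μ := by
            rw [lintegral_indicator hSmeas, setLIntegral_const]
        _ ≤ ∫⁻ x, klDiv (κ x) p ∂μ := by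
            refine lintegral_mono fun x => ?_
            by_cases hx : κ x s ≠ 0
            · rw [Set.indicator_of_mem (show x ∈ {x | κ x s ≠ 0} from hx)]
              have : klDiv (κ x) p = ⊤ := klDiv_of_not fun h => hx (h.1 hps)
              rw [this]
            · rw [Set.indicator_of_notMem (show x ∉ {x | κ x s ≠ 0} from hx)]
              exact zero_le
    rw [htop, hK, add_top]
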